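/- Let k_c be the critical coupling for existence of N-vortex solutions of the self-dual Chern-Simons equations on a flat torus Σ. Necessarily k_c ≤ (1/2)(|Σ|/(πN))^{1/2}; equivalently, if k² > |Σ|/(4πN) then the equations (11)–(12) with ∫_Σ F₁₂ = 2πN admit no solution with |φ| ≤ 1, because integrating k²F₁₂ = 2|φ|²(1-|φ|²) over Σ gives 2πNk² = 2∫_Σ |φ|²(1-|φ|²) ≤ 2·(1/4)·|Σ| = |Σ|/2. -/

import Mathlib

open MeasureTheory Real

/-- Necessary condition for existence of `N`-vortex solutions: if
`k² > |Σ|/(4πN)`, then there is no pair `(F, φ)` with `|φ| ≤ 1` satisfying the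
Bogomolny equation `k²F₁₂ = 2|φ|²(1-|φ|²)` and the flux condition
`∫F₁₂ = 2πN`; equivalently `k_c ≤ (1/2)(|Σ|/(πN))^{1/2}`. -/
theorem stmt16 {X : Type*} [MeasureSpace X]
    [IsFiniteMeasure (volume : Measure X)]
    (A : ℝ) (hA : 0 < A) (hvol : ((volume : Measure X) Set.univ).toReal = A)
    (N : ℕ) (hN : 0 < N) (k : ℝ) (hk : 0 < k) (hk2 : k^2 > A/(4*π*N)) :
    ¬ ∃ (F : X → ℝ) (φ : X → ℂ), Integrable F ∧
      (∀ x, ‖φ x‖ ≤ 1) ∧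
      (∀ x, k^2 * F x = 2 * ‖φ x‖^2 * (1 - ‖φ x‖^2)) ∧
      (∫ x, F x) = 2*π*N := by
  rintro ⟨F, φ, hF, hφ, heq, hflux⟩
  have hk2pos : (0:ℝ) < k^2 := by positivity
  have hFle : ∀ x, F x ≤ 1/(2*k^2) := by
    intro x
    set t := ‖φ x‖^2 with ht
    have ht0 : 0 ≤ t := by positivity
    have ht1 : t ≤ 1 := by
      have := hφ x
      nlinarith [norm_nonneg (φ x)]
    have h2 : k^2 * F x = 2*t*(1-t) := heq x
    rw [le_div_iff₀ (by positivity)]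
    nlinarith [sq_nonneg (2*t-1)]
  have hint : (∫ x, F x) ≤ ∫ _x : X, 1/(2*k^2) := by
    exact integral_mono hF (integrable_const _) hFle
  rw [hflux, integral_const, smul_eq_mul, measureReal_def, hvol] at hint
  have hπ : (0:ℝ) < π := Real.pi_pos
  have hNpos : (0:ℝ) < N := by exact_mod_cast hN
  rw [gt_iff_lt, div_lt_iff₀ (by positivity)] at hk2
  have h3 : A*(1/(2*k^2))*(2*k^2) = A := by field_simp
  nlinarith [mul_le_mul_of_nonneg_right hint (by positivity : (0:ℝ) ≤ 2*k^2)]
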